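/- Let k ≥ 2 be an integer and let T be a balanced tree on 2k+1 vertices. If n ≥ 4k² is an integer such that ⌊(2n+k)/4⌋ is even, then there exists a T̂-free graph on n vertices with exactly f(n,k) edges; in particular ex(n, T̂) ≥ f(n,k). -/

import Mathlib

/-- `f(n,k) = max{ n₀·n₁ + ⌊(k−1)·n₀/2⌋ : n₀ + n₁ = n }`. -/
def turanF (n k : ℕ) : ℕ :=
  (Finset.range (n + 1)).sup (fun n₀ => n₀ * (n - n₀) + (k - 1) * n₀ / 2)

/-- The suspension `Ĥ` of a graph `H`: a new vertex (`none`) joined to all of `H`. -/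
def suspension {V : Type*} (H : SimpleGraph V) : SimpleGraph (Option V) :=
  SimpleGraph.fromRel (fun x y => x = none ∨ ∃ a b, x = some a ∧ y = some b ∧ H.Adj a b)

/-- The Erdős–Sós conjecture holds for the tree `T'`: every graph on `N` vertices with
more than `(|T'|-2)·N/2` edges contains a copy of `T'`. -/
def ErdosSosProperty {m : ℕ} (T' : SimpleGraph (Fin m)) : Prop :=
  ∀ (N : ℕ) (G : SimpleGraph (Fin N)),
    2 * G.edgeSet.ncard > (m - 2) * N → ∃ f : T' →g G, Function.Injective f

namespace Stmt4Aux


lemma key_ineq (n k P m : ℕ) (hk : 2 ≤ k) (h1 : 4 * P ≤ 2 * n + k) (h2 : 2 * n + k < 4 * P + 4)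
    (hmn : m ≤ n) (hPn : P ≤ n) :
    2 * (m * (n - m)) + (k - 1) * m ≤ 2 * (P * (n - P)) + (k - 1) * P := by
  have hk1 : 1 ≤ k := by omega
  zify [hmn, hPn, hk1]
  set d : ℤ := (P : ℤ) - (m : ℤ) with hd
  have h3 : d ≤ d ^ 2 := Int.le_self_sq d
  have h4 : -d ≤ d ^ 2 := by nlinarith [sq_nonneg (d + 1)]
  set s : ℤ := 2 * (n : ℤ) + (k : ℤ) - 4 * (P : ℤ) - 1 with hs
  have hs0 : -1 ≤ s := by omega
  have hs2 : s ≤ 2 := by omega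
  have expand : 2 * ((P:ℤ) * ((n:ℤ) - P)) + ((k:ℤ) - 1) * P - (2 * ((m:ℤ) * ((n:ℤ) - m)) + ((k:ℤ) - 1) * m)
      = 2 * d ^ 2 + s * d := by simp only [hd, hs]; ring
  nlinarith [mul_nonneg (by linarith : (0:ℤ) ≤ s + 1) (by linarith : (0:ℤ) ≤ d ^ 2 + d),
    mul_nonneg (by linarith : (0:ℤ) ≤ 2 - s) (by linarith : (0:ℤ) ≤ d ^ 2 - d)]

lemma turanF_eq (n k P : ℕ) (hk : 2 ≤ k) (h1 : 4 * P ≤ 2 * n + k) (h2 : 2 * n + k < 4 * P + 4)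
    (hPn : P ≤ n) (hPe : 2 ∣ P) :
    turanF n k = P * (n - P) + (k - 1) * P / 2 := by
  apply le_antisymm
  · apply Finset.sup_le
    intro m hm
    rw [Finset.mem_range] at hm
    have hmn : m ≤ n := by omega
    have hKP : 2 ∣ (k - 1) * P := Dvd.dvd.mul_left hPe _
    have core := key_ineq n k P m hk h1 h2 hmn hPn
    omega
  · apply Finset.le_sup (f := fun n₀ => n₀ * (n - n₀) + (k - 1) * n₀ / 2)
    simp only [Finset.mem_range]; omega



def blkF (K c x : ℕ) : ℕ := if x < c then x / (2 * (K + 1)) else c + (x - c) / (2 * K)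
def posF (K c x : ℕ) : ℕ := if x < c then x % (2 * (K + 1)) else (x - c) % (2 * K)
def sideF (K c x : ℕ) : Prop := posF K c x < (if x < c then K + 1 else K)
def adjHF (K c x y : ℕ) : Prop :=
  blkF K c x = blkF K c y ∧ (sideF K c x ↔ ¬ sideF K c y) ∧
    (x < c → posF K c x % (K + 1) ≠ posF K c y % (K + 1))

instance (K c x : ℕ) : Decidable (sideF K c x) := Nat.decLt _ _

instance (K c x y : ℕ) : Decidable (adjHF K c x y) :=
  inferInstanceAs (Decidable (blkF K c x = blkF K c y ∧ (sideF K c x ↔ ¬ sideF K c y) ∧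
    (x < c → posF K c x % (K + 1) ≠ posF K c y % (K + 1))))

lemma blk_lt_iff (K c x : ℕ) : blkF K c x < c ↔ x < c := by
  unfold blkF
  split <;> rename_i h
  · simp only [iff_true, h]
    calc x / (2 * (K + 1)) ≤ x := Nat.div_le_self _ _
    _ < c := h
  · have : c ≤ c + (x - c) / (2 * K) := Nat.le_add_right _ _
    omega

lemma adjHF_region {K c x y : ℕ} (h : adjHF K c x y) : (x < c ↔ y < c) := by
  have := h.1
  rw [← blk_lt_iff K c x, ← blk_lt_iff K c y, this]

lemma adjHF_symm {K c x y : ℕ} (h : adjHF K c x y) : adjHF K c y x := by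
  obtain ⟨h1, h2, h3⟩ := h
  refine ⟨h1.symm, by tauto, fun hy => ?_⟩
  have hx : x < c := (adjHF_region ⟨h1, h2, h3⟩).mpr hy
  exact (h3 hx).symm

lemma adjHF_irrefl (K c x : ℕ) : ¬ adjHF K c x x := by
  rintro ⟨-, h2, -⟩; tauto

lemma div_mod_spec (D q r : ℕ) (h : r < D) : (D * q + r) / D = q ∧ (D * q + r) % D = r := by
  have h0 : 0 < D := by omega
  refine ⟨?_, ?_⟩
  · rw [Nat.mul_add_div h0, Nat.div_eq_of_lt h]; omega
  · rw [Nat.mul_add_mod, Nat.mod_eq_of_lt h]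

lemma count_nbr (K c P x : ℕ) (hK : 1 ≤ K) (hc : 2 * (K + 1) ∣ c) (hcP : c ≤ P)
    (hPc : 2 * K ∣ (P - c)) (hx : x < P) :
    ((Finset.range P).filter (adjHF K c x)).card = K := by
  by_cases hxc : x < c
  · -- big block, half-size K+1, width D = 2K+2
    obtain ⟨M, hM⟩ := hc
    set D := 2 * (K + 1) with hD
    set B := x / D with hB
    set p := x % D with hp
    set bb := D * B with hbb
    have hxeq : bb + p = x := Nat.div_add_mod x D
    have hpD : p < D := Nat.mod_lt _ (by omega)
    have hbase : bb + D ≤ c := by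
      have hBM : B < M := by
        rcases Nat.lt_or_ge B M with h | h
        · exact h
        · have : D * M ≤ D * B := Nat.mul_le_mul_left D h
          omega
      have h2 : D * (B + 1) ≤ D * M := Nat.mul_le_mul_left D (by omega)
      have h3 : D * (B + 1) = D * B + D := by ring
      rw [hbb]; omega
    set off := if p < K + 1 then K + 1 else 0 with hoff
    have hoffK : off + K + 1 ≤ D ∧ off ≤ K + 1 := by rw [hoff]; split <;> omega
    have hkey : (Finset.range P).filter (adjHF K c x)
        = ((Finset.range (K + 1)).erase (p % (K + 1))).image (fun t => bb + off + t) := by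
      ext y
      simp only [Finset.mem_filter, Finset.mem_range, Finset.mem_image, Finset.mem_erase]
      constructor
      · rintro ⟨hyP, hblk, hside, hmod⟩
        have hyc : y < c := (adjHF_region ⟨hblk, hside, hmod⟩).mp hxc
        have hblk' : y / D = B := by
          have e1 : blkF K c x = B := by rw [blkF, if_pos hxc]
          have e2 : blkF K c y = y / D := by rw [blkF, if_pos hyc]
          omega
        set r := y % D with hr
        have hyeq : bb + r = y := by
          have := Nat.div_add_mod y D
          rw [hblk'] at this; rw [hbb, hr]; omega
        have hrD : r < D := Nat.mod_lt _ (by omega)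
        have hpx : posF K c x = p := by rw [posF, if_pos hxc]
        have hpy : posF K c y = r := by rw [posF, if_pos hyc]
        have hsx : sideF K c x ↔ p < K + 1 := by rw [sideF, hpx, if_pos hxc]
        have hsy : sideF K c y ↔ r < K + 1 := by rw [sideF, hpy, if_pos hyc]
        rw [hsx, hsy] at hside
        have hmod' : p % (K + 1) ≠ r % (K + 1) := by
          have := hmod hxc; rw [hpx, hpy] at this; exact this
        by_cases hpk : p < K + 1
        · have hrk : ¬ r < K + 1 := by tauto
          have hoffe : off = K + 1 := by rw [hoff, if_pos hpk]
          have hrm : r % (K + 1) = r - (K + 1) := by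
            have : r = (K + 1) * 1 + (r - (K + 1)) := by omega
            rw [this, Nat.mul_add_mod, Nat.mod_eq_of_lt (by omega)]; omega
          have hpm : p % (K + 1) = p := Nat.mod_eq_of_lt hpk
          exact ⟨r - (K + 1), ⟨by omega, by omega⟩, by omega⟩
        · have hrk : r < K + 1 := by tauto
          have hoffe : off = 0 := by rw [hoff, if_neg hpk]
          have hrm : r % (K + 1) = r := Nat.mod_eq_of_lt hrk
          exact ⟨r, ⟨by omega, by omega⟩, by omega⟩
      · rintro ⟨t, ⟨htne, ht⟩, rfl⟩
        have hyc : bb + off + t < c := by omega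
        have hyP : bb + off + t < P := by omega
        have hspec := div_mod_spec D B (off + t) (by omega)
        have heq : bb + off + t = D * B + (off + t) := by rw [hbb]; ring
        have hblky : blkF K c (bb + off + t) = B := by
          rw [blkF, if_pos hyc, heq, hspec.1]
        have hposy : posF K c (bb + off + t) = off + t := by
          rw [posF, if_pos hyc, heq, hspec.2]
        have hblkx : blkF K c x = B := by rw [blkF, if_pos hxc]
        have hpx : posF K c x = p := by rw [posF, if_pos hxc]
        have hsy : sideF K c (bb + off + t) ↔ off + t < K + 1 := by
          rw [sideF, hposy, if_pos hyc]
        have hsx : sideF K c x ↔ p < K + 1 := by rw [sideF, hpx, if_pos hxc]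
        refine ⟨hyP, hblkx.trans hblky.symm, ?_, fun _ => ?_⟩
        · rw [hsx, hsy, hoff]
          split <;> rename_i h
          · simp only [h, true_iff]; omega
          · simp only [h, false_iff, not_not]; omega
        · rw [hpx, hposy]
          by_cases h : p < K + 1
          · have hoffe : off = K + 1 := by rw [hoff, if_pos h]
            have e : (off + t) % (K + 1) = t := by
              rw [hoffe, Nat.add_mod_left, Nat.mod_eq_of_lt ht]
            have e2 : p % (K + 1) = p := Nat.mod_eq_of_lt h
            omega
          · have hoffe : off = 0 := by rw [hoff, if_neg h]
            have e : (off + t) % (K + 1) = t := by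
              rw [hoffe, Nat.zero_add, Nat.mod_eq_of_lt ht]
            omega
    rw [hkey, Finset.card_image_of_injective _ (add_right_injective _),
      Finset.card_erase_of_mem (by simp [Nat.mod_lt _ (show 0 < K + 1 by omega)]),
      Finset.card_range]
    omega
  · -- small block, half-size K, width D = 2K
    obtain ⟨M, hM⟩ := hPc
    set D := 2 * K with hD
    set B := (x - c) / D with hB
    set p := (x - c) % D with hp
    set bb := D * B with hbb
    have hxeq : bb + p = x - c := Nat.div_add_mod (x - c) D
    have hpD : p < D := Nat.mod_lt _ (by omega)
    have hbase : bb + D ≤ P - c := by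
      have hBM : B < M := by
        rcases Nat.lt_or_ge B M with h | h
        · exact h
        · have : D * M ≤ D * B := Nat.mul_le_mul_left D h
          omega
      have h2 : D * (B + 1) ≤ D * M := Nat.mul_le_mul_left D (by omega)
      have h3 : D * (B + 1) = D * B + D := by ring
      rw [hbb]; omega
    set off := if p < K then K else 0 with hoff
    have hoffK : off + K ≤ D ∧ off ≤ K := by rw [hoff]; split <;> omega
    have hkey : (Finset.range P).filter (adjHF K c x)
        = (Finset.range K).image (fun t => c + bb + off + t) := by
      ext y
      simp only [Finset.mem_filter, Finset.mem_range, Finset.mem_image]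
      constructor
      · rintro ⟨hyP, hblk, hside, hmod⟩
        have hyc : ¬ y < c := fun h => hxc ((adjHF_region ⟨hblk, hside, hmod⟩).mpr h)
        have hblk' : (y - c) / D = B := by
          have e1 : blkF K c x = c + B := by rw [blkF, if_neg hxc]
          have e2 : blkF K c y = c + (y - c) / D := by rw [blkF, if_neg hyc]
          omega
        set r := (y - c) % D with hr
        have hyeq : bb + r = y - c := by
          have := Nat.div_add_mod (y - c) D
          rw [hblk'] at this; rw [hbb, hr]; omega
        have hrD : r < D := Nat.mod_lt _ (by omega)
        have hpx : posF K c x = p := by rw [posF, if_neg hxc]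
        have hpy : posF K c y = r := by rw [posF, if_neg hyc]
        have hsx : sideF K c x ↔ p < K := by rw [sideF, hpx, if_neg hxc]
        have hsy : sideF K c y ↔ r < K := by rw [sideF, hpy, if_neg hyc]
        rw [hsx, hsy] at hside
        by_cases hpk : p < K
        · have hrk : ¬ r < K := by tauto
          have hoffe : off = K := by rw [hoff, if_pos hpk]
          exact ⟨r - K, by omega, by omega⟩
        · have hrk : r < K := by tauto
          have hoffe : off = 0 := by rw [hoff, if_neg hpk]
          exact ⟨r, by omega, by omega⟩
      · rintro ⟨t, ht, rfl⟩
        have hyc : ¬ c + bb + off + t < c := by omega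
        have hyP : c + bb + off + t < P := by omega
        have hspec := div_mod_spec D B (off + t) (by omega)
        have hsub : c + bb + off + t - c = D * B + (off + t) := by rw [hbb] at *; omega
        have hblky : blkF K c (c + bb + off + t) = c + B := by
          rw [blkF, if_neg hyc, hsub, hspec.1]
        have hposy : posF K c (c + bb + off + t) = off + t := by
          rw [posF, if_neg hyc, hsub, hspec.2]
        have hblkx : blkF K c x = c + B := by rw [blkF, if_neg hxc]
        have hpx : posF K c x = p := by rw [posF, if_neg hxc]
        have hsy : sideF K c (c + bb + off + t) ↔ off + t < K := by
          rw [sideF, hposy, if_neg hyc]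
        have hsx : sideF K c x ↔ p < K := by rw [sideF, hpx, if_neg hxc]
        refine ⟨hyP, hblkx.trans hblky.symm, ?_, fun h => absurd h hxc⟩
        rw [hsx, hsy, hoff]
        split <;> rename_i h
        · simp only [h, true_iff]; omega
        · simp only [h, false_iff, not_not]; omega
    rw [hkey, Finset.card_image_of_injective _ (add_right_injective _), Finset.card_range]

lemma fiber_card (K c P B : ℕ) (hK : 1 ≤ K) :
    ((Finset.range P).filter (fun y => blkF K c y = B)).card ≤ 2 * (K + 1) := by
  classical
  set lo := if B < c then 2 * (K + 1) * B else c + 2 * K * (B - c) with hlo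
  have hsub : (Finset.range P).filter (fun y => blkF K c y = B)
      ⊆ (Finset.range (2 * (K + 1))).image (fun t => lo + t) := by
    intro y hy
    simp only [Finset.mem_filter, Finset.mem_range] at hy
    obtain ⟨hyP, hblk⟩ := hy
    simp only [Finset.mem_image, Finset.mem_range]
    by_cases hyc : y < c
    · have hBly : blkF K c y = y / (2 * (K + 1)) := by rw [blkF, if_pos hyc]
      have hBc : B < c := by rw [← hblk, blk_lt_iff]; exact hyc
      have hlo' : lo = 2 * (K + 1) * B := by rw [hlo, if_pos hBc]
      have h1 := Nat.div_add_mod y (2 * (K + 1))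
      have h2 : y % (2 * (K + 1)) < 2 * (K + 1) := Nat.mod_lt _ (by omega)
      refine ⟨y % (2 * (K + 1)), h2, ?_⟩
      rw [hlo', ← hblk, hBly]; omega
    · have hBly : blkF K c y = c + (y - c) / (2 * K) := by rw [blkF, if_neg hyc]
      have hBc : ¬ B < c := by rw [← hblk, blk_lt_iff]; exact hyc
      have hlo' : lo = c + 2 * K * (B - c) := by rw [hlo, if_neg hBc]
      have h1 := Nat.div_add_mod (y - c) (2 * K)
      have h2 : (y - c) % (2 * K) < 2 * K := Nat.mod_lt _ (by omega)
      refine ⟨(y - c) % (2 * K), by omega, ?_⟩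
      have hBe : B - c = (y - c) / (2 * K) := by rw [← hblk, hBly]; omega
      have hBc' : c ≤ B := by omega
      rw [hlo', hBe]; omega
  calc ((Finset.range P).filter (fun y => blkF K c y = B)).card
      ≤ ((Finset.range (2 * (K + 1))).image (fun t => lo + t)).card := Finset.card_le_card hsub
    _ ≤ (Finset.range (2 * (K + 1))).card := Finset.card_image_le
    _ = 2 * (K + 1) := Finset.card_range _

def GG (n K c P : ℕ) : SimpleGraph (Fin n) where
  Adj i j := (((i : ℕ) < P) ↔ ¬ ((j : ℕ) < P)) ∨
    ((i : ℕ) < P ∧ (j : ℕ) < P ∧ adjHF K c i j)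
  symm := by
    constructor
    rintro i j (h | ⟨h1, h2, h3⟩)
    · exact Or.inl (by tauto)
    · exact Or.inr ⟨h2, h1, adjHF_symm h3⟩
  loopless := by
    constructor
    rintro i (h | ⟨h1, h2, h3⟩)
    · tauto
    · exact adjHF_irrefl K c i h3

instance (n K c P : ℕ) : DecidableRel (GG n K c P).Adj := fun i j =>
  inferInstanceAs (Decidable ((((i : ℕ) < P) ↔ ¬ ((j : ℕ) < P)) ∨
    ((i : ℕ) < P ∧ (j : ℕ) < P ∧ adjHF K c i j)))

lemma GG_adj (n K c P : ℕ) (i j : Fin n) : (GG n K c P).Adj i j ↔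
    ((((i : ℕ) < P) ↔ ¬ ((j : ℕ) < P)) ∨
      ((i : ℕ) < P ∧ (j : ℕ) < P ∧ adjHF K c i j)) := Iff.rfl

lemma card_filter_fin (n : ℕ) (p : ℕ → Prop) [DecidablePred p] :
    (Finset.univ.filter (fun j : Fin n => p (j : ℕ))).card
      = ((Finset.range n).filter p).card := by
  refine Finset.card_bij (fun (j : Fin n) _ => (j : ℕ)) ?_ ?_ ?_
  · intro a ha
    simp only [Finset.mem_filter, Finset.mem_univ, true_and] at ha
    simp only [Finset.mem_filter, Finset.mem_range]
    exact ⟨a.isLt, ha⟩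
  · intro a _ b _ h
    exact Fin.val_injective h
  · intro b hb
    simp only [Finset.mem_filter, Finset.mem_range] at hb
    exact ⟨⟨b, hb.1⟩, by simp [hb.2], rfl⟩

lemma X_card (n P : ℕ) (hPn : P ≤ n) :
    (Finset.univ.filter (fun j : Fin n => (j : ℕ) < P)).card = P := by
  rw [card_filter_fin n (fun y => y < P)]
  have : (Finset.range n).filter (fun y => y < P) = Finset.range P := by
    ext y; simp only [Finset.mem_filter, Finset.mem_range]; omega
  rw [this, Finset.card_range]

lemma Xc_card (n P : ℕ) (hPn : P ≤ n) :
    (Finset.univ.filter (fun j : Fin n => ¬ (j : ℕ) < P)).card = n - P := by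
  have h := Finset.card_filter_add_card_filter_not
    (s := (Finset.univ : Finset (Fin n))) (p := fun j : Fin n => (j : ℕ) < P)
  rw [X_card n P hPn] at h
  simp only [Finset.card_univ, Fintype.card_fin] at h
  omega

lemma degY (n K c P : ℕ) (hPn : P ≤ n) (i : Fin n) (hi : ¬ (i : ℕ) < P) :
    (GG n K c P).degree i = P := by
  rw [← SimpleGraph.card_neighborFinset_eq_degree]
  have hfe : (GG n K c P).neighborFinset i
      = Finset.univ.filter (fun j : Fin n => (j : ℕ) < P) := by
    ext j
    simp only [SimpleGraph.mem_neighborFinset, Finset.mem_filter, Finset.mem_univ, true_and,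
      GG_adj]
    constructor
    · rintro (h | ⟨h1, -, -⟩)
      · tauto
      · exact absurd h1 hi
    · intro h; exact Or.inl (by tauto)
  rw [hfe]
  exact X_card n P hPn

lemma degX (n K c P : ℕ) (hPn : P ≤ n) (hK : 1 ≤ K) (hc : 2 * (K + 1) ∣ c) (hcP : c ≤ P)
    (hPc : 2 * K ∣ (P - c)) (i : Fin n) (hi : (i : ℕ) < P) :
    (GG n K c P).degree i = (n - P) + K := by
  rw [← SimpleGraph.card_neighborFinset_eq_degree]
  have hsplit : (GG n K c P).neighborFinset i
      = Finset.univ.filter (fun j : Fin n => ¬ (j : ℕ) < P)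
        ∪ Finset.univ.filter (fun j : Fin n => (j : ℕ) < P ∧ adjHF K c i j) := by
    ext j
    simp only [SimpleGraph.mem_neighborFinset, Finset.mem_filter, Finset.mem_univ, true_and,
      Finset.mem_union, GG_adj]
    constructor
    · rintro (h | ⟨-, h2, h3⟩)
      · exact Or.inl (by tauto)
      · exact Or.inr ⟨h2, h3⟩
    · rintro (h | ⟨h1, h2⟩)
      · exact Or.inl (by tauto)
      · exact Or.inr ⟨hi, h1, h2⟩
  rw [hsplit, Finset.card_union_of_disjoint, Xc_card n P hPn]
  · congr 1
    rw [card_filter_fin n (fun y => y < P ∧ adjHF K c i y)]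
    have : (Finset.range n).filter (fun y => y < P ∧ adjHF K c i y)
        = (Finset.range P).filter (adjHF K c i) := by
      ext y
      simp only [Finset.mem_filter, Finset.mem_range]
      constructor
      · rintro ⟨-, h2, h3⟩; exact ⟨h2, h3⟩
      · rintro ⟨h1, h2⟩; exact ⟨by omega, h1, h2⟩
    rw [this, count_nbr K c P i hK hc hcP hPc hi]
  · rw [Finset.disjoint_left]
    intro a ha hb
    simp only [Finset.mem_filter, Finset.mem_univ, true_and] at ha hb
    exact ha hb.1

lemma edge_count (n K c P : ℕ) (hPn : P ≤ n) (hK : 1 ≤ K) (hc : 2 * (K + 1) ∣ c)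
    (hcP : c ≤ P) (hPc : 2 * K ∣ (P - c)) (hPe : 2 ∣ P) :
    (GG n K c P).edgeFinset.card = P * (n - P) + K * P / 2 := by
  have hsum := (GG n K c P).sum_degrees_eq_twice_card_edges
  have hsplit : (∑ j ∈ Finset.univ.filter (fun j : Fin n => (j : ℕ) < P), (GG n K c P).degree j)
      + (∑ j ∈ Finset.univ.filter (fun j : Fin n => ¬ (j : ℕ) < P), (GG n K c P).degree j)
      = ∑ j : Fin n, (GG n K c P).degree j :=
    Finset.sum_filter_add_sum_filter_not _ _ _
  have h1 : ∑ j ∈ Finset.univ.filter (fun j : Fin n => (j : ℕ) < P), (GG n K c P).degree j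
      = P * ((n - P) + K) := by
    rw [Finset.sum_congr rfl (fun j hj => degX n K c P hPn hK hc hcP hPc j
      (by simpa using (Finset.mem_filter.mp hj).2))]
    rw [Finset.sum_const, X_card n P hPn, smul_eq_mul]
  have h2 : ∑ j ∈ Finset.univ.filter (fun j : Fin n => ¬ (j : ℕ) < P), (GG n K c P).degree j
      = (n - P) * P := by
    rw [Finset.sum_congr rfl (fun j hj => degY n K c P hPn j
      (by simpa using (Finset.mem_filter.mp hj).2))]
    rw [Finset.sum_const, Xc_card n P hPn, smul_eq_mul]
  have hexp : P * ((n - P) + K) = P * (n - P) + P * K := by ring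
  have hcomm : P * K = K * P := by ring
  have hmul : (n - P) * P = P * (n - P) := by ring
  have hdvd : 2 ∣ K * P := Dvd.dvd.mul_left hPe K
  omega


lemma walk_iff {V : Type} {T : SimpleGraph V} (q : V → Prop)
    (hq : ∀ a b, T.Adj a b → (q a ↔ q b)) : ∀ {u v : V}, T.Walk u v → (q u ↔ q v) := by
  intro u v w
  induction w with
  | nil => exact Iff.rfl
  | cons h p ih => exact (hq _ _ h).trans ih

lemma walk_eqf {V : Type} {T : SimpleGraph V} (g : V → ℕ)
    (hg : ∀ a b, T.Adj a b → g a = g b) : ∀ {u v : V}, T.Walk u v → g u = g v := by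
  intro u v w
  induction w with
  | nil => rfl
  | cons h p ih => exact (hg _ _ h).trans ih

end Stmt4Aux


set_option maxHeartbeats 1000000 in
open Stmt4Aux in
lemma GG_free (k : ℕ)
    {V : Type} [Fintype V] [DecidableEq V] (T : SimpleGraph V)
    (htree : T.IsTree)
    (hcard : Fintype.card V = 2 * k + 1)
    (A : Finset V) (hA : A.card = k)
    (hAind : ∀ x ∈ A, ∀ y ∈ A, ¬ T.Adj x y)
    (hAcind : ∀ x ∈ Aᶜ, ∀ y ∈ Aᶜ, ¬ T.Adj x y)
    (n K c P : ℕ) (hK : 1 ≤ K) (hkK : K + 1 = k)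
    (hc : 2 * (K + 1) ∣ c) (hcP : c ≤ P) (hPc : 2 * K ∣ (P - c)) :
    ¬ ∃ f : suspension T →g GG n K c P, Function.Injective f := by
  classical
  rintro ⟨f, hf⟩
  set w := f none with hw
  have hsus_apex : ∀ v : V, (suspension T).Adj none (some v) := by
    intro v
    exact ⟨by simp, Or.inl (Or.inl rfl)⟩
  have hsus_edge : ∀ a b : V, T.Adj a b → (suspension T).Adj (some a) (some b) := by
    intro a b hab
    exact ⟨by simpa using hab.ne, Or.inl (Or.inr ⟨a, b, rfl, rfl, hab⟩)⟩
  have hadj : ∀ v : V, (GG n K c P).Adj w (f (some v)) := fun v => f.map_adj (hsus_apex v)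
  have hGedge : ∀ a b : V, T.Adj a b → (GG n K c P).Adj (f (some a)) (f (some b)) :=
    fun a b hab => f.map_adj (hsus_edge a b hab)
  have hinj2 : Function.Injective (fun v : V => ((f (some v) : Fin n) : ℕ)) := by
    intro a b h
    have h2 : f (some a) = f (some b) := Fin.val_injective h
    have h3 := hf h2
    simpa using h3
  have hne : Nonempty V := by
    have h0 : 0 < Fintype.card V := by omega
    exact Fintype.card_pos_iff.mp h0
  obtain ⟨v0⟩ := hne
  rcases Nat.lt_or_ge ((w : Fin n) : ℕ) P with hwP | hwP
  · -- apex in X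
    set V1 := Finset.univ.filter (fun v : V => ((f (some v) : Fin n) : ℕ) < P) with hV1
    have hadjH : ∀ v : V, ((f (some v) : Fin n) : ℕ) < P →
        adjHF K c ((w : Fin n) : ℕ) ((f (some v) : Fin n) : ℕ) := by
      intro v hv
      have h := hadj v
      rw [GG_adj] at h
      rcases h with h | ⟨-, -, h3⟩
      · tauto
      · exact h3
    have hmem : ∀ v ∈ V1, ((f (some v) : Fin n) : ℕ)
        ∈ (Finset.range P).filter (adjHF K c ((w : Fin n) : ℕ)) := by
      intro v hv
      rw [hV1, Finset.mem_filter] at hv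
      exact Finset.mem_filter.mpr ⟨Finset.mem_range.mpr hv.2, hadjH v hv.2⟩
    have hV1card : V1.card ≤ K := by
      have h := Finset.card_le_card_of_injOn _ hmem (hinj2.injOn)
      rwa [count_nbr K c P _ hK hc hcP hPc hwP] at h
    have hstep : ∀ a b : V, T.Adj a b → ((a ∈ V1 ↔ a ∈ A) ↔ (b ∈ V1 ↔ b ∈ A)) := by
      intro a b hab
      have hAx1 : ¬ (a ∈ A ∧ b ∈ A) := fun ⟨ha, hb⟩ => hAind a ha b hb hab
      have hAx2 : ¬ (a ∉ A ∧ b ∉ A) := fun ⟨ha, hb⟩ =>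
        hAcind a (Finset.mem_compl.mpr ha) b (Finset.mem_compl.mpr hb) hab
      have hG := hGedge a b hab
      rw [GG_adj] at hG
      have hV1a : a ∈ V1 ↔ ((f (some a) : Fin n) : ℕ) < P := by
        rw [hV1, Finset.mem_filter]; simp
      have hV1b : b ∈ V1 ↔ ((f (some b) : Fin n) : ℕ) < P := by
        rw [hV1, Finset.mem_filter]; simp
      have hVx1 : ¬ (a ∈ V1 ∧ b ∈ V1) := by
        rintro ⟨ha, hb⟩
        rw [hV1a] at ha
        rw [hV1b] at hb
        rcases hG with h | ⟨-, -, h3⟩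
        · exact (h.mp ha) hb
        · have h3a := (hadjH a ha).2.1
          have h3b := (hadjH b hb).2.1
          have h3ab := h3.2.1
          by_cases hsa : sideF K c ((f (some a) : Fin n) : ℕ)
          · exact (fun hw' => (h3a.mp hw') hsa) (h3b.mpr (h3ab.mp hsa))
          · have hsb : sideF K c ((f (some b) : Fin n) : ℕ) := by
              by_contra hnb
              exact hsa (h3ab.mpr hnb)
            exact (h3b.mp (h3a.mpr hsa)) hsb
      have hVx2 : a ∈ V1 ∨ b ∈ V1 := by
        by_contra hcon
        push_neg at hcon
        obtain ⟨ha, hb⟩ := hcon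
        rw [hV1a] at ha
        rw [hV1b] at hb
        rcases hG with h | ⟨h1, -, -⟩
        · exact ha (h.mpr hb)
        · exact ha h1
      tauto
    have hconst : ∀ u v : V, ((u ∈ V1 ↔ u ∈ A) ↔ (v ∈ V1 ↔ v ∈ A)) := by
      intro u v
      obtain ⟨p⟩ := htree.isConnected.preconnected u v
      exact walk_iff (fun x => (x ∈ V1 ↔ x ∈ A)) hstep p
    by_cases hq : v0 ∈ V1 ↔ v0 ∈ A
    · have hVA : V1 = A := by
        ext v
        exact (hconst v v0).mpr hq
      rw [hVA, hA] at hV1card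
      omega
    · have hVA : V1 = Aᶜ := by
        ext v
        have h := hconst v v0
        rw [Finset.mem_compl]
        tauto
      rw [hVA, Finset.card_compl, hcard, hA] at hV1card
      omega
  · -- apex in Y
    have hvP : ∀ v : V, ((f (some v) : Fin n) : ℕ) < P := by
      intro v
      have h := hadj v
      rw [GG_adj] at h
      rcases h with h | ⟨h1, -, -⟩
      · have : ¬ ((w : Fin n) : ℕ) < P := by omega
        tauto
      · omega
    have hblkeq : ∀ a b : V, T.Adj a b →
        blkF K c ((f (some a) : Fin n) : ℕ) = blkF K c ((f (some b) : Fin n) : ℕ) := by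
      intro a b hab
      have h := hGedge a b hab
      rw [GG_adj] at h
      rcases h with h | ⟨-, -, h3⟩
      · have := hvP a
        have := hvP b
        tauto
      · exact h3.1
    have hcon : ∀ u v : V,
        blkF K c ((f (some u) : Fin n) : ℕ) = blkF K c ((f (some v) : Fin n) : ℕ) := by
      intro u v
      obtain ⟨p⟩ := htree.isConnected.preconnected u v
      exact walk_eqf (fun x => blkF K c ((f (some x) : Fin n) : ℕ)) hblkeq p
    set B := blkF K c ((f (some v0) : Fin n) : ℕ) with hB
    have hsub : Finset.univ.image (fun v : V => ((f (some v) : Fin n) : ℕ))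
        ⊆ (Finset.range P).filter (fun y => blkF K c y = B) := by
      intro y hy
      rw [Finset.mem_image] at hy
      obtain ⟨v, -, rfl⟩ := hy
      exact Finset.mem_filter.mpr ⟨Finset.mem_range.mpr (hvP v), hcon v v0⟩
    have hcard1 : (Finset.univ.image (fun v : V => ((f (some v) : Fin n) : ℕ))).card
        = 2 * k + 1 := by
      rw [Finset.card_image_of_injective _ hinj2, Finset.card_univ, hcard]
    have h1 := Finset.card_le_card hsub
    have h2 := fiber_card K c P B hK
    omega

open Stmt4Aux in
theorem stmt4 (k : ℕ) (hk : 2 ≤ k)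
    {V : Type} [Fintype V] [DecidableEq V] (T : SimpleGraph V)
    (htree : T.IsTree)
    (hcard : Fintype.card V = 2 * k + 1)
    (A : Finset V) (hA : A.card = k)
    (hAind : ∀ x ∈ A, ∀ y ∈ A, ¬ T.Adj x y)
    (hAcind : ∀ x ∈ Aᶜ, ∀ y ∈ Aᶜ, ¬ T.Adj x y)
    (n : ℕ) (hn : 4 * k ^ 2 ≤ n)
    (heven : 2 ∣ (2 * n + k) / 4) :
    ∃ G : SimpleGraph (Fin n),
      (¬ ∃ f : suspension T →g G, Function.Injective f) ∧
        G.edgeSet.ncard = turanF n k := by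
  obtain ⟨K, hKdef⟩ : ∃ K, K = k - 1 := ⟨_, rfl⟩
  have hK : 1 ≤ K := by omega
  obtain ⟨P, hPdef⟩ : ∃ P, P = (2 * n + k) / 4 := ⟨_, rfl⟩
  have hPe : 2 ∣ P := by rw [hPdef]; exact heven
  have hkk : k ≤ k * k := Nat.le_mul_of_pos_left k (by omega)
  have hn' : 4 * (k * k) ≤ n := by have h : k ^ 2 = k * k := sq k; omega
  have hPn : P ≤ n := by omega
  have hP2 : 2 * (k * k) ≤ P := by omega
  obtain ⟨b, hbdef⟩ : ∃ b, b = (P / 2) % K := ⟨_, rfl⟩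
  have hbK : b < K := by rw [hbdef]; exact Nat.mod_lt _ (by omega)
  obtain ⟨c, hcdef⟩ : ∃ c, c = 2 * (K + 1) * b := ⟨_, rfl⟩
  have hkK : K + 1 = k := by omega
  have hc : 2 * (K + 1) ∣ c := ⟨b, hcdef⟩
  have hcP : c ≤ P := by
    have h1 : 2 * (K + 1) * b ≤ 2 * (K + 1) * (K + 1) := by
      apply Nat.mul_le_mul_left; omega
    have h2 : 2 * (K + 1) * (K + 1) = 2 * (k * k) := by rw [hkK]; ring
    omega
  obtain ⟨Q, hQdef⟩ : ∃ Q, Q = P / 2 / K := ⟨_, rfl⟩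
  have hPQ : K * Q + b = P / 2 := by rw [hQdef, hbdef]; exact Nat.div_add_mod (P / 2) K
  have hkk2 : (K + 1) * (K + 1) ≤ P / 2 := by
    have h2 : (K + 1) * (K + 1) = k * k := by rw [hkK]
    omega
  have hbQ : b ≤ Q := by
    by_contra hQb
    push_neg at hQb
    have h1 : K * Q ≤ K * (K - 2) := Nat.mul_le_mul_left K (by omega)
    have h2 : K * (K - 2) ≤ K * K := Nat.mul_le_mul_left K (by omega)
    have h3 : (K + 1) * (K + 1) = K * K + 2 * K + 1 := by ring
    omega
  have hPc : 2 * K ∣ (P - c) := by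
    refine ⟨Q - b, ?_⟩
    have hmulsub : K * (Q - b) + K * b = K * Q := by
      rw [← Nat.mul_add, Nat.sub_add_cancel hbQ]
    have hcexp : c = 2 * (K * b) + 2 * b := by rw [hcdef]; ring
    have hexp : 2 * K * (Q - b) = 2 * (K * (Q - b)) := by ring
    omega
  refine ⟨GG n K c P,
    GG_free k T htree hcard A hA hAind hAcind n K c P hK hkK hc hcP hPc, ?_⟩
  have he := edge_count n K c P hPn hK hc hcP hPc hPe
  have ht : turanF n k = P * (n - P) + K * P / 2 := by
    rw [hKdef]
    exact turanF_eq n k P hk (by omega) (by omega) hPn hPe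
  have hn2 : (GG n K c P).edgeSet.ncard = (GG n K c P).edgeFinset.card := by
    rw [SimpleGraph.edgeFinset, Set.ncard_eq_toFinset_card']
  rw [hn2, he, ht]
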